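/- For every t ≥ 1 and r ≥ 3, there is a constant C (depending only on t and r) such that every n-vertex F_t-free graph contains at most C·n copies of K_r. -/

import Mathlib

/-- The graph `G` contains a copy of the `t`-fan `F_t`: a vertex `u` and distinct
vertices `v_1, w_1, ..., v_t, w_t`, with edges `uv_i`, `uw_i`, `v_iw_i` for each `i`. -/
def ContainsFan {V : Type*} (G : SimpleGraph V) (t : ℕ) : Prop :=
  ∃ (u : V) (v w : Fin t → V),
    Function.Injective (fun x : Fin t ⊕ Fin t => Sum.elim v w x) ∧
    (∀ i, v i ≠ u) ∧ (∀ i, w i ≠ u) ∧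
    (∀ i, G.Adj u (v i)) ∧ (∀ i, G.Adj u (w i)) ∧ (∀ i, G.Adj (v i) (w i))

open Finset

namespace FanFreeAux

/-- Two pairs have all four endpoints pairwise distinct. -/
def PairDisj {V : Type} (p q : V × V) : Prop :=
  p.1 ≠ q.1 ∧ p.1 ≠ q.2 ∧ p.2 ≠ q.1 ∧ p.2 ≠ q.2

variable {V : Type} [Fintype V] [DecidableEq V] (G : SimpleGraph V) [DecidableRel G.Adj]

/-- A matching of size `t` inside the neighborhood of `u` yields a `t`-fan. -/
lemma fan_of_matching (t : ℕ) (u : V) (P : Finset (V × V))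
    (hcard : P.card = t)
    (hmem : ∀ p ∈ P, G.Adj p.1 p.2 ∧ p.1 ∈ G.neighborFinset u ∧ p.2 ∈ G.neighborFinset u)
    (hdisj : ∀ p ∈ P, ∀ q ∈ P, p ≠ q → PairDisj p q) :
    ContainsFan G t := by
  classical
  let e := P.equivFinOfCardEq hcard
  set p : Fin t → V × V := fun i => (e.symm i : V × V) with hp
  have hpP : ∀ i, p i ∈ P := fun i => (e.symm i).2
  have hpne : ∀ i j, i ≠ j → PairDisj (p i) (p j) := by
    intro i j hij
    refine hdisj _ (hpP i) _ (hpP j) ?_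
    intro h
    exact hij (e.symm.injective (Subtype.ext h))
  refine ⟨u, fun i => (p i).1, fun i => (p i).2, ?_, ?_, ?_, ?_, ?_, ?_⟩
  · intro x y hxy
    rcases x with i | i <;> rcases y with j | j <;>
      simp only [Sum.elim_inl, Sum.elim_inr] at hxy
    · have : i = j := by
        by_contra hij
        exact (hpne i j hij).1 hxy
      exact congrArg Sum.inl this
    · exfalso
      by_cases hij : i = j
      · subst hij; exact (hmem _ (hpP i)).1.ne hxy
      · exact (hpne i j hij).2.1 hxy
    · exfalso
      by_cases hij : i = j
      · subst hij; exact (hmem _ (hpP i)).1.ne' hxy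
      · exact (hpne i j hij).2.2.1 hxy
    · have : i = j := by
        by_contra hij
        exact (hpne i j hij).2.2.2 hxy
      exact congrArg Sum.inr this
  · intro i
    exact ((G.mem_neighborFinset u _).mp (hmem _ (hpP i)).2.1).ne'
  · intro i
    exact ((G.mem_neighborFinset u _).mp (hmem _ (hpP i)).2.2).ne'
  · intro i
    exact (G.mem_neighborFinset u _).mp (hmem _ (hpP i)).2.1
  · intro i
    exact (G.mem_neighborFinset u _).mp (hmem _ (hpP i)).2.2
  · intro i
    exact (hmem _ (hpP i)).1

/-- Greedy construction of a matching from many heavy vertices. -/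
lemma exists_matching (t : ℕ) :
    ∀ (k : ℕ) (N W F : Finset V), W.card = k →
    (∀ v ∈ W, v ∈ N ∧ 2 * t ≤ (N ∩ G.neighborFinset v).card) →
    (∀ v ∈ W, v ∉ F) → F.card + 2 * k ≤ 2 * t →
    ∃ P : Finset (V × V), P.card = k ∧
      (∀ p ∈ P, G.Adj p.1 p.2 ∧ p.1 ∈ N ∧ p.2 ∈ N ∧ p.1 ∉ F ∧ p.2 ∉ F) ∧
      (∀ p ∈ P, ∀ q ∈ P, p ≠ q → PairDisj p q) := by
  intro k
  induction k with
  | zero =>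
    intro N W F _ _ _ _
    exact ⟨∅, by simp, by simp, by simp⟩
  | succ k ih =>
    intro N W F hW hWmem hWF hcard
    have hWne : W.Nonempty := card_pos.mp (by omega)
    obtain ⟨v, hv⟩ := hWne
    have hv' := hWmem v hv
    have hFW : (F ∪ W).card < 2 * t := by
      have h1 : (F ∪ W).card ≤ F.card + W.card := card_union_le _ _
      omega
    have hxex : ((N ∩ G.neighborFinset v) \ (F ∪ W)).Nonempty := by
      apply card_pos.mp
      have h2 := Finset.le_card_sdiff (F ∪ W) (N ∩ G.neighborFinset v)
      omega
    obtain ⟨x, hx⟩ := hxex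
    rw [mem_sdiff, mem_inter, mem_union] at hx
    obtain ⟨⟨hxN, hxv⟩, hxFW⟩ := hx
    have hxF : x ∉ F := fun h => hxFW (Or.inl h)
    have hxW : x ∉ W := fun h => hxFW (Or.inr h)
    have hvx : G.Adj v x := (G.mem_neighborFinset v x).mp hxv
    -- recursive call
    obtain ⟨P', hP'card, hP'mem, hP'disj⟩ :=
      ih N (W.erase v) (insert v (insert x F))
        (by rw [card_erase_of_mem hv, hW]; rfl)
        (fun w hw => hWmem w (erase_subset _ _ hw))
        (by
          intro w hw
          rw [mem_erase] at hw
          simp only [mem_insert]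
          push_neg
          exact ⟨hw.1, fun h => hxW (h ▸ hw.2), hWF w hw.2⟩)
        (by
          have h3 : (insert v (insert x F)).card ≤ F.card + 2 := by
            calc (insert v (insert x F)).card ≤ (insert x F).card + 1 :=
                  card_insert_le _ _
              _ ≤ F.card + 1 + 1 := by
                  have := card_insert_le x F; omega
              _ = F.card + 2 := by omega
          omega)
    have hvxP' : (v, x) ∉ P' := by
      intro h
      exact (hP'mem _ h).2.2.2.1 (mem_insert_self _ _)
    refine ⟨insert (v, x) P', ?_, ?_, ?_⟩
    · rw [card_insert_of_notMem hvxP', hP'card]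
    · intro q hq
      rw [mem_insert] at hq
      rcases hq with rfl | hq
      · exact ⟨hvx, hv'.1, hxN, hWF v hv, hxF⟩
      · have := hP'mem q hq
        refine ⟨this.1, this.2.1, this.2.2.1, ?_, ?_⟩
        · intro h; exact this.2.2.2.1 (mem_insert_of_mem (mem_insert_of_mem h))
        · intro h; exact this.2.2.2.2 (mem_insert_of_mem (mem_insert_of_mem h))
    · intro q hq q' hq' hqq'
      rw [mem_insert] at hq hq'
      have key : ∀ r ∈ P', PairDisj (v, x) r := by
        intro r hr
        have hm := hP'mem r hr
        have h1 : r.1 ≠ v := fun h => hm.2.2.2.1 (h ▸ mem_insert_self _ _)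
        have h2 : r.1 ≠ x := fun h =>
          hm.2.2.2.1 (mem_insert_of_mem (h ▸ mem_insert_self _ _))
        have h3 : r.2 ≠ v := fun h => hm.2.2.2.2 (h ▸ mem_insert_self _ _)
        have h4 : r.2 ≠ x := fun h =>
          hm.2.2.2.2 (mem_insert_of_mem (h ▸ mem_insert_self _ _))
        exact ⟨fun h => h1 h.symm, fun h => h3 h.symm, fun h => h2 h.symm,
          fun h => h4 h.symm⟩
      rcases hq with rfl | hq
      · rcases hq' with rfl | hq'
        · exact absurd rfl hqq'
        · exact key q' hq'
      · rcases hq' with rfl | hq'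
        · have := key q hq
          exact ⟨fun h => this.1 h.symm, fun h => this.2.2.1 h.symm,
            fun h => this.2.1 h.symm, fun h => this.2.2.2 h.symm⟩
        · exact hP'disj q hq q' hq' hqq'

/-- If there is no matching of size `k` inside `N`, then the edges inside `N` have a
vertex cover of size at most `2k`. -/
lemma exists_cover (k : ℕ) :
    ∀ N : Finset V,
    (∀ P : Finset (V × V),
       (∀ p ∈ P, G.Adj p.1 p.2 ∧ p.1 ∈ N ∧ p.2 ∈ N) →
       (∀ p ∈ P, ∀ q ∈ P, p ≠ q → PairDisj p q) → P.card < k) →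
    ∃ B : Finset V, B.card ≤ 2 * k ∧
      ∀ a ∈ N, ∀ b ∈ N, G.Adj a b → a ∈ B ∨ b ∈ B := by
  induction k with
  | zero =>
    intro N h
    exact absurd (h ∅ (by simp) (by simp)) (by simp)
  | succ k ih =>
    intro N h
    by_cases he : ∃ a ∈ N, ∃ b ∈ N, G.Adj a b
    · obtain ⟨a, ha, b, hb, hab⟩ := he
      set N' := (N.erase a).erase b with hN'
      have hN'sub : N' ⊆ N := (erase_subset _ _).trans (erase_subset _ _)
      have hN'a : a ∉ N' := by
        intro hmem
        exact (notMem_erase a N) (mem_of_mem_erase hmem)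
      have hN'b : b ∉ N' := notMem_erase b _
      have hno : ∀ P : Finset (V × V),
          (∀ p ∈ P, G.Adj p.1 p.2 ∧ p.1 ∈ N' ∧ p.2 ∈ N') →
          (∀ p ∈ P, ∀ q ∈ P, p ≠ q → PairDisj p q) → P.card < k := by
        intro P hPmem hPdisj
        have habP : (a, b) ∉ P := by
          intro hmem
          exact hN'a (hPmem _ hmem).2.1
        have hcard : (insert (a, b) P).card < k + 1 := by
          apply h
          · intro p hp
            rw [mem_insert] at hp
            rcases hp with rfl | hp
            · exact ⟨hab, ha, hb⟩
            · have := hPmem p hp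
              exact ⟨this.1, hN'sub this.2.1, hN'sub this.2.2⟩
          · intro p hp q hq hpq
            rw [mem_insert] at hp hq
            have key : ∀ r ∈ P, PairDisj (a, b) r := by
              intro r hr
              have hm := hPmem r hr
              have h1 : r.1 ≠ a := fun hh => hN'a (hh ▸ hm.2.1)
              have h2 : r.1 ≠ b := fun hh => hN'b (hh ▸ hm.2.1)
              have h3 : r.2 ≠ a := fun hh => hN'a (hh ▸ hm.2.2)
              have h4 : r.2 ≠ b := fun hh => hN'b (hh ▸ hm.2.2)
              exact ⟨fun hh => h1 hh.symm, fun hh => h3 hh.symm,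
                fun hh => h2 hh.symm, fun hh => h4 hh.symm⟩
            rcases hp with rfl | hp
            · rcases hq with rfl | hq
              · exact absurd rfl hpq
              · exact key q hq
            · rcases hq with rfl | hq
              · have := key p hp
                exact ⟨fun hh => this.1 hh.symm, fun hh => this.2.2.1 hh.symm,
                  fun hh => this.2.1 hh.symm, fun hh => this.2.2.2 hh.symm⟩
              · exact hPdisj p hp q hq hpq
        rw [card_insert_of_notMem habP] at hcard
        omega
      obtain ⟨B', hB'card, hB'cov⟩ := ih N' hno
      · refine ⟨insert a (insert b B'), ?_, ?_⟩
        · have h1 := card_insert_le a (insert b B')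
          have h2 := card_insert_le b B'
          omega
        · intro c hc d hd hcd
          by_cases hca : c = a
          · exact Or.inl (hca ▸ mem_insert_self _ _)
          by_cases hcb : c = b
          · exact Or.inl (hcb ▸ mem_insert_of_mem (mem_insert_self _ _))
          by_cases hda : d = a
          · exact Or.inr (hda ▸ mem_insert_self _ _)
          by_cases hdb : d = b
          · exact Or.inr (hdb ▸ mem_insert_of_mem (mem_insert_self _ _))
          have hcN' : c ∈ N' := by
            rw [hN', mem_erase, mem_erase]; exact ⟨hcb, hca, hc⟩
          have hdN' : d ∈ N' := by
            rw [hN', mem_erase, mem_erase]; exact ⟨hdb, hda, hd⟩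
          rcases hB'cov c hcN' d hdN' hcd with h' | h'
          · exact Or.inl (mem_insert_of_mem (mem_insert_of_mem h'))
          · exact Or.inr (mem_insert_of_mem (mem_insert_of_mem h'))
    · push_neg at he
      exact ⟨∅, by simp, fun a ha b hb hab => absurd (he a ha b hb) (by simp [hab])⟩

/-- In an `F_t`-free graph, every vertex has fewer than `t` heavy neighbors. -/
lemma card_heavy_lt (t : ℕ) (hfan : ¬ ContainsFan G t) (u : V) :
    ((G.neighborFinset u).filter
      (fun v => 2 * t ≤ ((G.neighborFinset u) ∩ G.neighborFinset v).card)).card < t := by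
  by_contra hle
  push_neg at hle
  obtain ⟨W, hWsub, hWcard⟩ := exists_subset_card_eq hle
  obtain ⟨P, hPcard, hPmem, hPdisj⟩ :=
    exists_matching G t t (G.neighborFinset u) W ∅ hWcard
      (by
        intro v hv
        have := hWsub hv
        rw [mem_filter] at this
        exact ⟨this.1, this.2⟩)
      (by simp) (by simp)
  exact hfan (fan_of_matching G t u P hPcard
    (fun p hp => ⟨(hPmem p hp).1, (hPmem p hp).2.1, (hPmem p hp).2.2.1⟩) hPdisj)

end FanFreeAux

open FanFreeAux in
/-- For every `t ≥ 1` and `r ≥ 3` there is a constant `C` (depending only on `t` and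
`r`) such that every `n`-vertex `F_t`-free graph contains at most `C·n` copies of
`K_r`. -/
theorem cliques_linear_of_fanFree (t r : ℕ) (ht : 1 ≤ t) (hr : 3 ≤ r) :
    ∃ C : ℕ, ∀ (V : Type) [Fintype V] [DecidableEq V]
      (G : SimpleGraph V) [DecidableRel G.Adj],
      ¬ ContainsFan G t → (G.cliqueFinset r).card ≤ C * Fintype.card V := by
  classical
  refine ⟨2 ^ (2 * t) * (18 * t ^ 2 + 1), ?_⟩
  intro V _ _ G _ hfan
  -- vertex covers of the neighborhood graphs
  have hcov : ∀ u : V, ∃ B : Finset V, B.card ≤ 2 * t ∧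
      ∀ a ∈ G.neighborFinset u, ∀ b ∈ G.neighborFinset u, G.Adj a b →
        a ∈ B ∨ b ∈ B := by
    intro u
    apply exists_cover G t
    intro P hPmem hPdisj
    by_contra hP
    push_neg at hP
    obtain ⟨P₀, hP₀sub, hP₀card⟩ := exists_subset_card_eq hP
    exact hfan (fan_of_matching G t u P₀ hP₀card
      (fun p hp => hPmem p (hP₀sub hp))
      (fun p hp q hq => hPdisj p (hP₀sub hp) q (hP₀sub hq)))
  choose B hBcard hBcov using hcov
  -- heavy neighbors
  set H : V → Finset V := fun a =>
    (G.neighborFinset a).filter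
      (fun c => 2 * t ≤ ((G.neighborFinset a) ∩ G.neighborFinset c).card) with hHdef
  have hH : ∀ a, (H a).card < t := fun a => card_heavy_lt G t hfan a
  set K : V → V → Finset V := fun x a =>
    H a ∪ (if 2 * t ≤ ((G.neighborFinset x) ∩ G.neighborFinset a).card then ∅
           else (G.neighborFinset x) ∩ G.neighborFinset a) with hKdef
  have hK : ∀ x a, (K x a).card ≤ 3 * t := by
    intro x a
    have h1 := hH a
    by_cases hvy : 2 * t ≤ ((G.neighborFinset x) ∩ G.neighborFinset a).card
    · have : K x a = H a := by rw [hKdef]; simp [hvy]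
      rw [this]; omega
    · have h2 := card_union_le (H a)
        ((G.neighborFinset x) ∩ G.neighborFinset a)
      have h3 : K x a = H a ∪ ((G.neighborFinset x) ∩ G.neighborFinset a) := by
        rw [hKdef]; simp [hvy]
      rw [h3]
      omega
  -- every triangle has a good ordered representative
  have hgoodmain : ∀ x a b : V, G.Adj x a → G.Adj x b → G.Adj a b → a ∈ B x →
      ∃ p : V × V × V, ({p.1, p.2.1, p.2.2} : Finset V) = {x, a, b} ∧
        p.2.1 ∈ B p.1 ∧ p.2.2 ∈ K p.1 p.2.1 := by
    intro x a b hxa hxb hab haB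
    by_cases hvy : 2 * t ≤ ((G.neighborFinset x) ∩ G.neighborFinset a).card
    · -- heavy pair {x, a}; use the cover at b
      have h2 := hBcov b x ((G.mem_neighborFinset b x).mpr hxb.symm)
        a ((G.mem_neighborFinset b a).mpr hab.symm) hxa
      rcases h2 with hxB | haB'
      · refine ⟨(b, x, a), ?_, hxB, ?_⟩
        · ext c; simp; tauto
        · apply mem_union_left
          rw [hHdef]
          simp only [mem_filter]
          exact ⟨(G.mem_neighborFinset x a).mpr hxa, hvy⟩
      · refine ⟨(b, a, x), ?_, haB', ?_⟩
        · ext c; simp; tauto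
        · apply mem_union_left
          rw [hHdef]
          simp only [mem_filter]
          refine ⟨(G.mem_neighborFinset a x).mpr hxa.symm, ?_⟩
          rwa [inter_comm]
    · refine ⟨(x, a, b), rfl, haB, ?_⟩
      apply mem_union_right
      rw [if_neg hvy]
      exact mem_inter.mpr ⟨(G.mem_neighborFinset x b).mpr hxb,
        (G.mem_neighborFinset a b).mpr hab⟩
  have hgood : ∀ x a b : V, G.Adj x a → G.Adj x b → G.Adj a b →
      ∃ p : V × V × V, ({p.1, p.2.1, p.2.2} : Finset V) = {x, a, b} ∧
        p.2.1 ∈ B p.1 ∧ p.2.2 ∈ K p.1 p.2.1 := by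
    intro x a b hxa hxb hab
    rcases hBcov x a ((G.mem_neighborFinset x a).mpr hxa)
        b ((G.mem_neighborFinset x b).mpr hxb) hab with haB | hbB
    · exact hgoodmain x a b hxa hxb hab haB
    · obtain ⟨p, hset, h1, h2⟩ := hgoodmain x b a hxb hxa hab.symm hbB
      refine ⟨p, ?_, h1, h2⟩
      rw [hset]; ext c; simp; tauto
  -- the set of good triples
  set D : Finset (V × V × V) :=
    univ.filter (fun p : V × V × V => p.2.1 ∈ B p.1 ∧ p.2.2 ∈ K p.1 p.2.1) with hDdef
  have hD : D.card ≤ Fintype.card V * (6 * t ^ 2) := by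
    have hsub : D ⊆ univ.biUnion
        (fun x => (B x).biUnion (fun a => {x} ×ˢ ({a} ×ˢ K x a))) := by
      intro p hp
      rw [hDdef, mem_filter] at hp
      rw [mem_biUnion]
      refine ⟨p.1, mem_univ _, ?_⟩
      rw [mem_biUnion]
      refine ⟨p.2.1, hp.2.1, ?_⟩
      rw [mem_product, mem_product]
      exact ⟨mem_singleton_self _, mem_singleton_self _, hp.2.2⟩
    calc D.card ≤ ∑ x : V, ((B x).biUnion (fun a => {x} ×ˢ ({a} ×ˢ K x a))).card :=
          (card_le_card hsub).trans card_biUnion_le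
      _ ≤ ∑ _x : V, 6 * t ^ 2 := by
          apply Finset.sum_le_sum
          intro x _
          calc ((B x).biUnion (fun a => {x} ×ˢ ({a} ×ˢ K x a))).card
              ≤ ∑ a ∈ B x, ({x} ×ˢ ({a} ×ˢ K x a)).card := card_biUnion_le
            _ ≤ ∑ _a ∈ B x, 3 * t := by
                apply Finset.sum_le_sum
                intro a _
                rw [card_product, card_singleton, one_mul, card_product,
                  card_singleton, one_mul]
                exact hK x a
            _ = (B x).card * (3 * t) := by rw [sum_const, smul_eq_mul]
            _ ≤ 2 * t * (3 * t) := by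
                exact Nat.mul_le_mul_right _ (hBcard x)
            _ = 6 * t ^ 2 := by ring
      _ = Fintype.card V * (6 * t ^ 2) := by
          rw [sum_const, card_univ, smul_eq_mul]
  -- the two encoding sets
  set E₁ : Finset ((V × V × V) × Fin 3 × Finset V) :=
    D.biUnion (fun p => (univ : Finset (Fin 3)).biUnion
      (fun i => {p} ×ˢ ({i} ×ˢ (B (![p.1, p.2.1, p.2.2] i)).powerset))) with hE₁def
  have hE₁ : E₁.card ≤ D.card * (3 * 2 ^ (2 * t)) := by
    calc E₁.card ≤ ∑ p ∈ D, ((univ : Finset (Fin 3)).biUnion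
          (fun i => {p} ×ˢ ({i} ×ˢ (B (![p.1, p.2.1, p.2.2] i)).powerset))).card :=
        card_biUnion_le
      _ ≤ ∑ _p ∈ D, 3 * 2 ^ (2 * t) := by
          apply Finset.sum_le_sum
          intro p _
          calc ((univ : Finset (Fin 3)).biUnion _).card
              ≤ ∑ i : Fin 3, ({p} ×ˢ ({i} ×ˢ (B (![p.1, p.2.1, p.2.2] i)).powerset)).card :=
              card_biUnion_le
            _ ≤ ∑ _i : Fin 3, 2 ^ (2 * t) := by
                apply Finset.sum_le_sum
                intro i _
                rw [card_product, card_singleton, one_mul, card_product,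
                  card_singleton, one_mul, card_powerset]
                exact Nat.pow_le_pow_right (by norm_num) (hBcard _)
            _ = 3 * 2 ^ (2 * t) := by
                rw [sum_const, card_univ, smul_eq_mul]
                norm_num
      _ = D.card * (3 * 2 ^ (2 * t)) := by rw [sum_const, smul_eq_mul]
  set E₂ : Finset (V × Finset V) :=
    univ.biUnion (fun x : V => {x} ×ˢ (B x).powerset) with hE₂def
  have hE₂ : E₂.card ≤ Fintype.card V * 2 ^ (2 * t) := by
    calc E₂.card ≤ ∑ x : V, ({x} ×ˢ (B x).powerset).card := card_biUnion_le
      _ ≤ ∑ _x : V, 2 ^ (2 * t) := by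
          apply Finset.sum_le_sum
          intro x _
          rw [card_product, card_singleton, one_mul, card_powerset]
          exact Nat.pow_le_pow_right (by norm_num) (hBcard _)
      _ = Fintype.card V * 2 ^ (2 * t) := by rw [sum_const, card_univ, smul_eq_mul]
  -- encoding maps
  set f₁ : ((V × V × V) × Fin 3 × Finset V) → Finset V :=
    fun q => {q.1.1, q.1.2.1, q.1.2.2} ∪ q.2.2 with hf₁def
  set f₂ : V × Finset V → Finset V := fun q => insert q.1 q.2 with hf₂def
  -- every r-clique is hit
  have hmain : G.cliqueFinset r ⊆ E₁.image f₁ ∪ E₂.image f₂ := by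
    intro S hS
    rw [SimpleGraph.mem_cliqueFinset_iff] at hS
    have hclique := hS.1
    have hcard := hS.2
    have hSne : S.Nonempty := card_pos.mp (by omega)
    obtain ⟨x, hx⟩ := hSne
    have hadjx : ∀ y ∈ S, y ≠ x → G.Adj x y := by
      intro y hy hyx
      exact hclique hx hy (Ne.symm hyx)
    by_cases hout : ∀ y ∈ S.erase x, y ∈ B x
    · apply mem_union_right
      rw [mem_image]
      refine ⟨(x, S.erase x), ?_, ?_⟩
      · rw [hE₂def, mem_biUnion]
        refine ⟨x, mem_univ _, ?_⟩
        rw [mem_product]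
        exact ⟨mem_singleton_self _, mem_powerset.mpr hout⟩
      · rw [hf₂def]
        exact insert_erase hx
    · push_neg at hout
      obtain ⟨y, hyS', hyB⟩ := hout
      rw [mem_erase] at hyS'
      obtain ⟨hyx, hyS⟩ := hyS'
      have hrest : ∀ c ∈ S, c ≠ x → c ≠ y → c ∈ B x := by
        intro c hc hcx hcy
        by_contra hcB
        have hadj_cy : G.Adj c y := hclique hc hyS hcy
        rcases hBcov x c ((G.mem_neighborFinset x c).mpr (hadjx c hc hcx))
            y ((G.mem_neighborFinset x y).mpr (hadjx y hyS hyx)) hadj_cy with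
          h' | h'
        · exact hcB h'
        · exact hyB h'
      have hane : ((S.erase x).erase y).Nonempty := by
        apply card_pos.mp
        rw [card_erase_of_mem, card_erase_of_mem hx]
        · omega
        · rw [mem_erase]; exact ⟨hyx, hyS⟩
      obtain ⟨a, ha⟩ := hane
      rw [mem_erase, mem_erase] at ha
      obtain ⟨hay, hax, haS⟩ := ha
      have haB : a ∈ B x := hrest a haS hax hay
      obtain ⟨p, hpset, hp1, hp2⟩ :=
        hgood x a y (hadjx a haS hax) (hadjx y hyS hyx) (hclique haS hyS hay)
      have hxp : x ∈ ({p.1, p.2.1, p.2.2} : Finset V) := by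
        rw [hpset]; simp
      have hiex : ∃ i : Fin 3, ![p.1, p.2.1, p.2.2] i = x := by
        simp only [mem_insert, mem_singleton] at hxp
        rcases hxp with h | h | h
        · exact ⟨0, h.symm⟩
        · exact ⟨1, h.symm⟩
        · exact ⟨2, h.symm⟩
      obtain ⟨i, hi⟩ := hiex
      have hQ : S \ {x, a, y} ⊆ B (![p.1, p.2.1, p.2.2] i) := by
        rw [hi]
        intro c hc
        rw [mem_sdiff, mem_insert, mem_insert, mem_singleton] at hc
        push_neg at hc
        exact hrest c hc.1 hc.2.1 hc.2.2.2
      apply mem_union_left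
      rw [mem_image]
      refine ⟨(p, i, S \ {x, a, y}), ?_, ?_⟩
      · rw [hE₁def, mem_biUnion]
        refine ⟨p, ?_, ?_⟩
        · rw [hDdef, mem_filter]
          exact ⟨mem_univ _, hp1, hp2⟩
        · rw [mem_biUnion]
          refine ⟨i, mem_univ _, ?_⟩
          rw [mem_product, mem_product]
          exact ⟨mem_singleton_self _, mem_singleton_self _, mem_powerset.mpr hQ⟩
      · rw [hf₁def]
        show ({p.1, p.2.1, p.2.2} : Finset V) ∪ (S \ {x, a, y}) = S
        rw [hpset]
        apply union_sdiff_of_subset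
        intro c hc
        rw [mem_insert, mem_insert, mem_singleton] at hc
        rcases hc with rfl | rfl | rfl
        · exact hx
        · exact haS
        · exact hyS
  -- assemble the bound
  calc (G.cliqueFinset r).card ≤ (E₁.image f₁ ∪ E₂.image f₂).card :=
        card_le_card hmain
    _ ≤ (E₁.image f₁).card + (E₂.image f₂).card := card_union_le _ _
    _ ≤ E₁.card + E₂.card := Nat.add_le_add card_image_le card_image_le
    _ ≤ D.card * (3 * 2 ^ (2 * t)) + Fintype.card V * 2 ^ (2 * t) :=
        Nat.add_le_add hE₁ hE₂
    _ ≤ Fintype.card V * (6 * t ^ 2) * (3 * 2 ^ (2 * t)) +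
          Fintype.card V * 2 ^ (2 * t) :=
        Nat.add_le_add_right (Nat.mul_le_mul_right _ hD) _
    _ = 2 ^ (2 * t) * (18 * t ^ 2 + 1) * Fintype.card V := by ring
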